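/- Let a ∈ ℤ^N, regard a as a vector in ℝ^N, let Q = I_N + a aᵀ, and let V be an invertible real N×N matrix with Vᵀ V = Q. Then there exists a sign vector y ∈ {−1, +1}^N with ∑_{n=1}^N y_n a_n = 0 if and only if there exists w ∈ ℝ^N with ‖w‖₂² ≤ N and |(V⁻¹ w)_n| ≥ 1 for every n ∈ {1,…,N}. -/

import Mathlib

open Matrix

lemma quad_eq_aux (N : ℕ) (a : Fin N → ℤ) (V : Matrix (Fin N) (Fin N) ℝ)
    (hQ : Vᵀ * V = 1 + Matrix.vecMulVec (fun n => (a n : ℝ)) (fun n => (a n : ℝ)))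
    (p : Fin N → ℝ) :
    ∑ i, (V *ᵥ p) i ^ 2 = ∑ i, p i ^ 2 + (∑ i, (a i : ℝ) * p i) ^ 2 := by
  have h : p ⬝ᵥ ((Vᵀ * V) *ᵥ p) = (V *ᵥ p) ⬝ᵥ (V *ᵥ p) := by
    rw [← mulVec_mulVec, dotProduct_mulVec, vecMul_transpose]
  rw [hQ] at h
  have hL : (V *ᵥ p) ⬝ᵥ (V *ᵥ p) = ∑ i, (V *ᵥ p) i ^ 2 := by
    simp [dotProduct, sq]
  have h1 : p ⬝ᵥ p = ∑ i, p i ^ 2 := by simp [dotProduct, sq]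
  have h2 : p ⬝ᵥ (Matrix.vecMulVec (fun n => (a n : ℝ)) (fun n => (a n : ℝ)) *ᵥ p)
      = (∑ i, (a i : ℝ) * p i) ^ 2 := by
    simp only [mulVec, vecMulVec_apply, dotProduct, sq, Finset.mul_sum, Finset.sum_mul]
    rw [Finset.sum_comm]
    exact Finset.sum_congr rfl fun i _ => Finset.sum_congr rfl fun j _ => by ring
  rw [← hL, ← h, add_mulVec, one_mulVec, dotProduct_add, h1, h2]

/-- Reduction of PARTITION to real beamforming feasibility: with
`Q = I + a aᵀ` and `Vᵀ V = Q` (`V` invertible), a zero-sum sign vector for `a`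
exists iff some `w` with `‖w‖₂² ≤ N` satisfies `|(V⁻¹ w)ₙ| ≥ 1` for all `n`. -/
theorem partition_iff_beamforming (N : ℕ) (a : Fin N → ℤ)
    (V : Matrix (Fin N) (Fin N) ℝ) (hV : IsUnit V)
    (hQ : Vᵀ * V = 1 + Matrix.vecMulVec (fun n => (a n : ℝ)) (fun n => (a n : ℝ))) :
    (∃ y : Fin N → ℤ, (∀ n : Fin N, y n = -1 ∨ y n = 1) ∧ ∑ n, y n * a n = 0) ↔
      (∃ w : EuclideanSpace ℝ (Fin N), ‖w‖ ^ 2 ≤ (N : ℝ) ∧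
        ∀ n : Fin N, 1 ≤ |(V⁻¹ *ᵥ (w : Fin N → ℝ)) n|) := by
  have hdet : IsUnit V.det := (Matrix.isUnit_iff_isUnit_det V).mp hV
  have hinv : V⁻¹ * V = 1 := Matrix.nonsing_inv_mul V hdet
  have hinv' : V * V⁻¹ = 1 := Matrix.mul_nonsing_inv V hdet
  have hnorm : ∀ w : EuclideanSpace ℝ (Fin N), ‖w‖ ^ 2 = ∑ i, (w : Fin N → ℝ) i ^ 2 := by
    intro w
    rw [EuclideanSpace.norm_eq, Real.sq_sqrt (by positivity)]
    simp [Real.norm_eq_abs, sq_abs]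
  constructor
  · rintro ⟨y, hy, hsum⟩
    set p : Fin N → ℝ := fun n => (y n : ℝ) with hp
    refine ⟨WithLp.toLp 2 (V *ᵥ p : Fin N → ℝ), ?_, ?_⟩
    · rw [hnorm]
      have := quad_eq_aux N a V hQ p
      have hap : ∑ i, (a i : ℝ) * p i = 0 := by
        have : ((∑ n, y n * a n : ℤ) : ℝ) = 0 := by rw [hsum]; norm_num
        push_cast at this
        rw [← this]
        exact Finset.sum_congr rfl fun i _ => by ring
      have hp2 : ∀ i, p i ^ 2 = 1 := by
        intro i
        rcases hy i with h | h <;> simp [hp, h]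
      calc ∑ i, (WithLp.toLp 2 (V *ᵥ p : Fin N → ℝ) : EuclideanSpace ℝ (Fin N)) i ^ 2
          = ∑ i, (V *ᵥ p) i ^ 2 := rfl
        _ = ∑ i, p i ^ 2 + (∑ i, (a i : ℝ) * p i) ^ 2 := quad_eq_aux N a V hQ p
        _ ≤ (N : ℝ) := le_of_eq (by simp [hp2, hap])
    · intro n
      have : V⁻¹ *ᵥ (V *ᵥ p) = p := by
        rw [mulVec_mulVec, hinv, one_mulVec]
      show 1 ≤ |(V⁻¹ *ᵥ (V *ᵥ p)) n|
      rw [this]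
      rcases hy n with h | h <;> simp [hp, h]
  · rintro ⟨w, hw, habs⟩
    set p : Fin N → ℝ := V⁻¹ *ᵥ (w : Fin N → ℝ) with hp
    have hwp : (w : Fin N → ℝ) = V *ᵥ p := by
      rw [hp, mulVec_mulVec, hinv', one_mulVec]
    have hq : ∑ i, p i ^ 2 + (∑ i, (a i : ℝ) * p i) ^ 2 ≤ (N : ℝ) := by
      rw [← quad_eq_aux N a V hQ p, ← hwp]
      rw [hnorm] at hw
      exact hw
    have hge : ∀ i, (1 : ℝ) ≤ p i ^ 2 := by
      intro i
      have := habs i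
      calc (1 : ℝ) = 1 ^ 2 := by norm_num
        _ ≤ |p i| ^ 2 := by apply pow_le_pow_left₀ (by norm_num) this _
        _ = p i ^ 2 := sq_abs _
    have hsumge : (N : ℝ) ≤ ∑ i, p i ^ 2 := by
      calc (N : ℝ) = ∑ _i : Fin N, (1 : ℝ) := by simp
        _ ≤ ∑ i, p i ^ 2 := Finset.sum_le_sum fun i _ => hge i
    have hap : ∑ i, (a i : ℝ) * p i = 0 := by
      nlinarith [sq_nonneg (∑ i, (a i : ℝ) * p i)]
    have hsq1 : ∀ i, p i ^ 2 = 1 := by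
      have hle : ∑ i, p i ^ 2 ≤ (N : ℝ) := by nlinarith
      have hz : ∑ i, (p i ^ 2 - 1) = 0 := by
        have : ∑ i, (p i ^ 2 - 1) = ∑ i, p i ^ 2 - N := by
          rw [Finset.sum_sub_distrib]; simp
        rw [this]; linarith
      intro i
      have := (Finset.sum_eq_zero_iff_of_nonneg
        (fun j _ => by linarith [hge j])).mp hz i (Finset.mem_univ i)
      linarith
    have hpm : ∀ i, p i = 1 ∨ p i = -1 := by
      intro i
      have h := hsq1 i
      have h2 : (p i - 1) * (p i + 1) = 0 := by nlinarith
      rcases mul_eq_zero.mp h2 with h3 | h3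
      · left; linarith
      · right; linarith
    refine ⟨fun n => if p n = 1 then 1 else -1, fun n => by by_cases h : p n = 1 <;> simp [h], ?_⟩
    have hcast : ∀ n, ((if p n = 1 then (1:ℤ) else -1 : ℤ) : ℝ) = p n := by
      intro n
      rcases hpm n with h | h
      · simp [h]
      · rw [if_neg (by rw [h]; norm_num), h]; norm_num
    have : ((∑ n, (if p n = 1 then (1:ℤ) else -1) * a n : ℤ) : ℝ) = 0 := by
      push_cast
      calc ∑ n, ((if p n = 1 then (1:ℝ) else -1)) * a n
          = ∑ n, (a n : ℝ) * p n := by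
            refine Finset.sum_congr rfl fun n _ => ?_
            have := hcast n
            push_cast at this
            rw [this]; ring
        _ = 0 := hap
    exact_mod_cast this
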